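/- Let a₂ > 8/√15 and let G(s) = -(1/3)s³ + (a₂/4)s⁴ - (1/5)s⁵ (case DFD with a₁ = -1, a₃ = -1). Then G has a positive root c (the smallest positive root), and g(c) > 0 where g(s) = -s² + a₂s³ - s⁴. Conversely if a₂ ≤ 8/√15 then there is no positive root c of G with g(c) > 0. -/
import Mathlib


theorem stmt2 (a₂ : ℝ) :
    let G : ℝ → ℝ := fun s => -(1/3) * s^3 + (a₂/4) * s^4 - (1/5) * s^5
    let g : ℝ → ℝ := fun s => -s^2 + a₂ * s^3 - s^4
    (8 / Real.sqrt 15 < a₂ →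
      ∃ c : ℝ, 0 < c ∧ G c = 0 ∧ (∀ s : ℝ, 0 < s → s < c → G s ≠ 0) ∧ 0 < g c) ∧
    (a₂ ≤ 8 / Real.sqrt 15 → ¬ ∃ c : ℝ, 0 < c ∧ G c = 0 ∧ 0 < g c) := by
  intro G g
  have ht0 : (0:ℝ) < Real.sqrt 15 := Real.sqrt_pos.mpr (by norm_num)
  have ht : Real.sqrt 15 ^ 2 = 15 := Real.sq_sqrt (by norm_num)
  set t := Real.sqrt 15 with htdef
  constructor
  · intro hlt
    have h8 : 8 < a₂ * t := (div_lt_iff₀ ht0).mp hlt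
    have ha : 0 < a₂ := by nlinarith
    have hkey : (960:ℝ) < 225 * a₂^2 := by nlinarith
    set D := Real.sqrt (225 * a₂^2 - 960) with hDdef
    have hD2 : D^2 = 225 * a₂^2 - 960 := Real.sq_sqrt (by linarith)
    have hD0 : 0 < D := Real.sqrt_pos.mpr (by linarith)
    have hDlt : D < 15 * a₂ := by nlinarith
    set c := (15 * a₂ - D) / 24 with hcdef
    set c' := (15 * a₂ + D) / 24 with hc'def
    have hc0 : 0 < c := by rw [hcdef]; linarith
    have hcc' : c < c' := by rw [hcdef, hc'def]; linarith
    have hG : ∀ s : ℝ, G s = -(1/5) * s^3 * (s - c) * (s - c') := by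
      intro s
      show -(1/3) * s^3 + (a₂/4) * s^4 - (1/5) * s^5 = _
      rw [hcdef, hc'def]
      linear_combination (-(s^3)/2880) * hD2
    have hpc : a₂ * c = 4/3 + (4/5) * c^2 := by
      rw [hcdef]
      linear_combination (-1/720) * hD2
    have hc53 : c^2 < 5/3 := by
      have hprod : c * c' = 5/3 := by
        rw [hcdef, hc'def]
        linear_combination (-1/576) * hD2
      nlinarith [mul_lt_mul_of_pos_left hcc' hc0]
    refine ⟨c, hc0, ?_, ?_, ?_⟩
    · rw [hG]; ring
    · intro s hs0 hsc
      rw [hG]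
      have hsc' : s < c' := lt_trans hsc hcc'
      have h1 : s - c ≠ 0 := sub_ne_zero.mpr hsc.ne
      have h2 : s - c' ≠ 0 := sub_ne_zero.mpr hsc'.ne
      have h3 : s^3 ≠ 0 := pow_ne_zero 3 hs0.ne'
      exact mul_ne_zero (mul_ne_zero (mul_ne_zero (by norm_num) h3) h1) h2
    · show 0 < -c^2 + a₂ * c^3 - c^4
      have hc2 : 0 < c^2 := pow_pos hc0 2
      nlinarith [mul_pos hc2 (show (0:ℝ) < 1/3 - c^2/5 by linarith)]
  · intro hle ⟨c, hc0, hGc, hgc⟩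
    have hGc' : -(1/3) * c^3 + (a₂/4) * c^4 - (1/5) * c^5 = 0 := hGc
    have hgc' : 0 < -c^2 + a₂ * c^3 - c^4 := hgc
    have hc3 : (0:ℝ) < c^3 := pow_pos hc0 3
    have hfac : c^3 * (-(1/3) + (a₂/4) * c - (1/5) * c^2) = 0 := by
      linear_combination hGc'
    have hb : -(1/3) + (a₂/4) * c - (1/5) * c^2 = 0 := by
      rcases mul_eq_zero.mp hfac with h | h
      · exact absurd h hc3.ne'
      · exact h
    have hpc : a₂ * c = 4/3 + (4/5) * c^2 := by linarith
    have h2 : 0 < -1 + a₂ * c - c^2 := by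
      nlinarith [pow_pos hc0 2, hgc']
    have hc53 : c^2 < 5/3 := by nlinarith
    have h1 : a₂ * t ≤ 8 := (le_div_iff₀ ht0).mp hle
    have h1c : a₂ * t * (t * c) ≤ 8 * (t * c) :=
      mul_le_mul_of_nonneg_right h1 (mul_pos ht0 hc0).le
    have heq : a₂ * t * (t * c) = 15 * (a₂ * c) := by
      linear_combination (a₂ * c) * ht
    have hA : 20 + 12 * c^2 ≤ 8 * (t * c) := by
      rw [heq, hpc] at h1c; linarith
    have hB : (t - 3*c)^2 ≤ 0 := by nlinarith [hA, ht]
    have hB0 : t - 3*c = 0 := by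
      have hnn := sq_nonneg (t - 3*c)
      have hz : (t - 3*c)^2 = 0 := le_antisymm hB hnn
      exact pow_eq_zero_iff (by norm_num) |>.mp hz
    have ht3 : t = 3 * c := by linarith
    have h9 : 9 * c^2 = 15 := by
      calc 9 * c^2 = (3*c)^2 := by ring
        _ = t^2 := by rw [ht3]
        _ = 15 := ht
    linarith
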